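/- Let p ≥ 2 and let S_t := c · ∑_{ν≥0} λ(ν)λ(ν+t) p^{-ν} for t ≥ 0, where λ(ν) = (α^{ν+1}−β^{ν+1})/(α−β), αβ=1, |α|,|β| < p^{1/2}, and c any nonzero constant. Then S_t = λ(1)·S_{t−1} − S_{t−2} for all t ≥ 2, and S_1 = (λ(1)/(1+p⁻¹))·S_0. -/

import Mathlib

/-- Recurrence for the inner-product series `S_t = c·∑_{ν≥0} λ(ν)λ(ν+t)p^{-ν}` with
Hecke eigenvalues `λ(ν) = (α^{ν+1}−β^{ν+1})/(α−β)`, `αβ = 1`, `|α|,|β| < √p`: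
`S_t = λ(1)·S_{t−1} − S_{t−2}` for `t ≥ 2`, and `S_1 = (λ(1)/(1+p⁻¹))·S_0`. -/
theorem S_recurrence (p : ℝ) (hp : 1 < p) (α β : ℂ) (hαβ : α * β = 1) (hne : α ≠ β)
    (hα : ‖α‖ < Real.sqrt p) (hβ : ‖β‖ < Real.sqrt p)
    (c : ℂ) (hc : c ≠ 0) :
    let lam : ℕ → ℂ := fun ν => (α ^ (ν + 1) - β ^ (ν + 1)) / (α - β)
    let S : ℕ → ℂ := fun t => c * ∑' ν : ℕ, lam ν * lam (ν + t) * ((p : ℂ)⁻¹) ^ ν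
    (∀ t : ℕ, 2 ≤ t → S t = lam 1 * S (t - 1) - S (t - 2)) ∧
      S 1 = (lam 1 / (1 + (p : ℂ)⁻¹)) * S 0 := by
  intro lam S
  have hp0 : (0:ℝ) < p := lt_trans one_pos hp
  have hsub : α - β ≠ 0 := sub_ne_zero.mpr hne
  have hd : 0 < ‖α - β‖ := norm_pos_iff.mpr hsub
  set q : ℂ := ((p:ℂ))⁻¹ with hqdef
  have hqnorm : ‖q‖ = p⁻¹ := by
    rw [hqdef, norm_inv, Complex.norm_real, Real.norm_of_nonneg hp0.le]
  set M : ℝ := max ‖α‖ ‖β‖ with hMdef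
  have hM0 : 0 ≤ M := le_trans (norm_nonneg α) (le_max_left _ _)
  have hMlt : M < Real.sqrt p := by
    rw [hMdef]
    exact max_lt hα hβ
  have hM2 : M ^ 2 < p := by
    have := pow_lt_pow_left₀ hMlt hM0 (n := 2) two_ne_zero
    rwa [Real.sq_sqrt hp0.le] at this
  have hr : M ^ 2 / p < 1 := (div_lt_one hp0).mpr hM2
  have hr0 : 0 ≤ M ^ 2 / p := by positivity
  -- bound on lam
  have hlam_bd : ∀ k : ℕ, ‖lam k‖ ≤ 2 * M ^ (k + 1) / ‖α - β‖ := by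
    intro k
    have h1 : ‖α ^ (k+1) - β ^ (k+1)‖ ≤ 2 * M ^ (k+1) := by
      calc ‖α ^ (k+1) - β ^ (k+1)‖ ≤ ‖α ^ (k+1)‖ + ‖β ^ (k+1)‖ := norm_sub_le _ _
        _ = ‖α‖ ^ (k+1) + ‖β‖ ^ (k+1) := by rw [norm_pow, norm_pow]
        _ ≤ M ^ (k+1) + M ^ (k+1) := by
            gcongr
            · exact le_max_left _ _
            · exact le_max_right _ _
        _ = 2 * M ^ (k+1) := by ring
    calc ‖lam k‖ = ‖α ^ (k+1) - β ^ (k+1)‖ / ‖α - β‖ := by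
          simp [lam, norm_div]
      _ ≤ 2 * M ^ (k+1) / ‖α - β‖ := by gcongr
  -- summability
  have hsum : ∀ t : ℕ, Summable (fun ν : ℕ => lam ν * lam (ν + t) * q ^ ν) := by
    intro t
    apply Summable.of_norm_bounded
      (g := fun ν : ℕ => (4 / ‖α - β‖ ^ 2 * M ^ (t + 2)) * (M ^ 2 / p) ^ ν)
    · exact (summable_geometric_of_lt_one hr0 hr).mul_left _
    · intro ν
      have hb1 := hlam_bd ν
      have hb2 := hlam_bd (ν + t)
      calc ‖lam ν * lam (ν + t) * q ^ ν‖ = ‖lam ν‖ * ‖lam (ν + t)‖ * ‖q‖ ^ ν := by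
            rw [norm_mul, norm_mul, norm_pow]
        _ ≤ (2 * M ^ (ν + 1) / ‖α - β‖) * (2 * M ^ (ν + t + 1) / ‖α - β‖) * (p⁻¹) ^ ν := by
            rw [hqnorm]
            gcongr <;> positivity
        _ = (4 / ‖α - β‖ ^ 2 * M ^ (t + 2)) * (M ^ 2 / p) ^ ν := by
            rw [div_pow, inv_pow]
            field_simp
            ring
  -- recurrence for lam
  have lam_rec : ∀ m : ℕ, lam (m + 2) = lam 1 * lam (m + 1) - lam m := by
    intro m
    simp only [lam]
    have h1 : (α ^ (1 + 1) - β ^ (1 + 1)) / (α - β) = α + β := by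
      rw [div_eq_iff hsub]; ring
    rw [h1, mul_div_assoc', div_sub_div_same, eq_div_iff hsub, div_mul_cancel₀ _ hsub]
    linear_combination (β ^ (m+1) - α ^ (m+1)) * hαβ
  have lam0 : lam 0 = 1 := by
    show (α ^ 1 - β ^ 1) / (α - β) = 1
    rw [pow_one, pow_one]
    exact div_self hsub
  constructor
  · intro t ht
    obtain ⟨s, rfl⟩ : ∃ s, t = s + 2 := ⟨t - 2, by omega⟩
    have hidx1 : s + 2 - 1 = s + 1 := by omega
    have hidx2 : s + 2 - 2 = s := by omega
    rw [hidx1, hidx2]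
    have key : ∀ ν : ℕ, lam ν * lam (ν + (s + 2)) * q ^ ν =
        lam 1 * (lam ν * lam (ν + (s + 1)) * q ^ ν) - lam ν * lam (ν + s) * q ^ ν := by
      intro ν
      have h := lam_rec (ν + s)
      have e1 : ν + (s + 2) = ν + s + 2 := by omega
      have e2 : ν + (s + 1) = ν + s + 1 := by omega
      rw [e1, e2, h]; ring
    show c * ∑' ν : ℕ, lam ν * lam (ν + (s+2)) * q ^ ν
        = lam 1 * (c * ∑' ν : ℕ, lam ν * lam (ν + (s+1)) * q ^ ν)
          - c * ∑' ν : ℕ, lam ν * lam (ν + s) * q ^ ν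
    rw [tsum_congr key, Summable.tsum_sub ((hsum (s+1)).mul_left (lam 1)) (hsum s), tsum_mul_left]
    ring
  · -- S 1 = lam 1 / (1 + q) * S 0
    have hq1 : (1 : ℂ) + q ≠ 0 := by
      have h1 : ((1:ℝ) + p⁻¹ : ℝ) ≠ 0 := by positivity
      have h2 : (1 : ℂ) + q = ((1 + p⁻¹ : ℝ) : ℂ) := by
        rw [hqdef]; push_cast; ring
      rw [h2]
      exact_mod_cast h1
    have hs0 : Summable (fun ν : ℕ => lam ν * lam (ν + 0) * q ^ ν) := hsum 0
    have hs1 : Summable (fun ν : ℕ => lam ν * lam (ν + 1) * q ^ ν) := hsum 1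
    set A : ℂ := ∑' ν : ℕ, lam ν * lam (ν + 1) * q ^ ν with hA
    set B : ℂ := ∑' ν : ℕ, lam ν * lam (ν + 0) * q ^ ν with hB
    have hs1' : Summable (fun ν : ℕ => lam (ν+1) * lam (ν+1+1) * q ^ (ν+1)) :=
      (summable_nat_add_iff (f := fun ν : ℕ => lam ν * lam (ν + 1) * q ^ ν) 1).mpr hs1
    have hshiftA : ∑' ν : ℕ, lam (ν+1) * lam (ν+1+1) * q ^ (ν+1)
        = A - lam 0 * lam (0+1) * q ^ 0 := by
      have h := Summable.tsum_eq_zero_add hs1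
      rw [hA, h]; ring
    have hterm : ∀ ν : ℕ, lam 1 * (lam (ν+1) * lam (ν+1+0) * q ^ (ν+1)) =
        lam (ν+1) * lam (ν+1+1) * q ^ (ν+1) + q * (lam ν * lam (ν+1) * q ^ ν) := by
      intro ν
      have e : ν + 1 + 1 = ν + 2 := rfl
      have e0 : ν + 1 + 0 = ν + 1 := rfl
      rw [e0, e, lam_rec ν]; ring
    have hmain : lam 1 * B = (1 + q) * A := by
      calc lam 1 * B = ∑' ν : ℕ, lam 1 * (lam ν * lam (ν + 0) * q ^ ν) := by
            rw [tsum_mul_left]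
        _ = lam 1 * (lam 0 * lam (0+0) * q ^ 0)
              + ∑' ν : ℕ, lam 1 * (lam (ν+1) * lam (ν+1+0) * q ^ (ν+1)) := by
            exact Summable.tsum_eq_zero_add (hs0.mul_left (lam 1))
        _ = lam 1 * (lam 0 * lam (0+0) * q ^ 0)
              + ∑' ν : ℕ, (lam (ν+1) * lam (ν+1+1) * q ^ (ν+1)
                + q * (lam ν * lam (ν+1) * q ^ ν)) := by
            rw [tsum_congr hterm]
        _ = lam 1 * (lam 0 * lam (0+0) * q ^ 0)
              + ((A - lam 0 * lam (0+1) * q ^ 0) + q * A) := by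
            rw [Summable.tsum_add hs1' (hs1.mul_left q), hshiftA, tsum_mul_left, ← hA]
        _ = (1 + q) * A := by
            rw [show lam (0+0) = lam 0 from rfl, show lam (0+1) = lam 1 from rfl, lam0]; ring
    show c * A = lam 1 / (1 + q) * (c * B)
    rw [div_mul_eq_mul_div, eq_div_iff hq1]
    linear_combination (-c) * hmain
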